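/- Let T ∈ [0,∞), let (Ω, F, P, (F_t)_{t∈[0,T]}) be a stochastic basis, let (E, d_E) be a complete and separable metric space, and let Y : [0,T] × Ω → E be an (F_t)_{t∈[0,T]}-adapted stochastic process such that for every t ∈ (0,∞) ∩ (−∞,T] it holds that limsup_{[0,T]∋s→t} E[min{1, d_E(Y_s, Y_t)}] = 0. Then there exists an (F_t)_{t∈[0,T]}-predictable stochastic process X : [0,T] × Ω → E (i.e., X is measurable from the predictable σ-algebra Pred((F_t)_{t∈[0,T]}) to the Borel σ-algebra of E) such that for all t ∈ [0,T] it holds that P(X_t = Y_t) = 1. -/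

import Mathlib

open MeasureTheory Filter Set

noncomputable section

/-- The predictable σ-algebra `Pred((𝓕_t)_{t ∈ [0,T]})` on `[0,T] × Ω` associated to a
filtration `𝓕`, generated by the sets `(s,t] × A` with `0 ≤ s < t ≤ T`, `A ∈ 𝓕 s`,
together with the sets `{0} × A` with `A ∈ 𝓕 0`. -/
def Pred {Ω : Type*} (𝓕 : ℝ → MeasurableSpace Ω) (T : ℝ) :
    MeasurableSpace (Set.Icc (0:ℝ) T × Ω) :=
  MeasurableSpace.generateFrom
    ({S : Set (Set.Icc (0:ℝ) T × Ω) | ∃ s t : ℝ, ∃ A : Set Ω,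
        0 ≤ s ∧ s < t ∧ t ≤ T ∧ MeasurableSet[𝓕 s] A ∧
        S = {p : Set.Icc (0:ℝ) T × Ω | s < (p.1 : ℝ) ∧ (p.1 : ℝ) ≤ t ∧ p.2 ∈ A}} ∪
     {S : Set (Set.Icc (0:ℝ) T × Ω) | ∃ A : Set Ω, MeasurableSet[𝓕 0] A ∧
        S = {p : Set.Icc (0:ℝ) T × Ω | (p.1 : ℝ) = 0 ∧ p.2 ∈ A}})

/-- left grid point strictly below `t` on grid of mesh `c` (clamped at `0`). -/
def pir (c t : ℝ) : ℝ := max 0 ((⌈t / c⌉ - 1) * c)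

lemma pir_nonneg (c t : ℝ) : 0 ≤ pir c t := le_max_left _ _

lemma pir_le {c t : ℝ} (hc : 0 < c) (ht : 0 ≤ t) : pir c t ≤ t := by
  apply max_le ht
  have h1 : (⌈t / c⌉ - 1 : ℝ) ≤ t / c := by
    have := Int.ceil_lt_add_one (t / c)
    push_cast
    linarith
  calc ((⌈t / c⌉ : ℝ) - 1) * c ≤ (t / c) * c := by nlinarith
    _ = t := by field_simp

lemma pir_lt {c t : ℝ} (hc : 0 < c) (ht : 0 < t) : pir c t < t := by
  apply max_lt ht
  have h1 : (⌈t / c⌉ - 1 : ℝ) < t / c := by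
    have := Int.ceil_lt_add_one (t / c)
    push_cast
    linarith
  calc ((⌈t / c⌉ : ℝ) - 1) * c < (t / c) * c := by nlinarith
    _ = t := by field_simp

lemma sub_le_pir {c t : ℝ} (hc : 0 < c) : t - c ≤ pir c t := by
  refine le_trans ?_ (le_max_right _ _)
  have h1 : t / c ≤ (⌈t / c⌉ : ℝ) := Int.le_ceil _
  have : t ≤ (⌈t / c⌉ : ℝ) * c := by
    calc t = (t / c) * c := by field_simp
      _ ≤ (⌈t / c⌉ : ℝ) * c := by nlinarith
  linarith [show ((⌈t / c⌉ : ℝ) - 1) * c = (⌈t / c⌉ : ℝ) * c - c by ring]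

lemma pir_zero (c : ℝ) (hc : 0 < c) : pir c 0 = 0 := by
  simp [pir]
  positivity

lemma pir_eq {c t : ℝ} (hc : 0 < c) {k : ℕ} (h1 : (k : ℝ) * c < t)
    (h2 : t ≤ ((k : ℝ) + 1) * c) : pir c t = (k : ℝ) * c := by
  have hceil : ⌈t / c⌉ = (k : ℤ) + 1 := by
    rw [Int.ceil_eq_iff]
    constructor
    · push_cast
      rw [lt_div_iff₀ hc]
      linarith
    · push_cast
      rw [div_le_iff₀ hc]
      linarith
  rw [pir, hceil]
  push_cast
  ring_nf
  rw [max_eq_right]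
  positivity

lemma pir_nat {c t : ℝ} (hc : 0 < c) (ht : 0 < t) :
    ∃ k : ℕ, pir c t = (k : ℝ) * c ∧ t ≤ ((k : ℝ) + 1) * c := by
  have hx : 0 < t / c := div_pos ht hc
  have hge : 1 ≤ ⌈t / c⌉ := by exact_mod_cast Int.ceil_pos.2 hx
  refine ⟨(⌈t / c⌉ - 1).toNat, ?_, ?_⟩
  · rw [pir, max_eq_right]
    · congr 1
      have : ((⌈t / c⌉ - 1).toNat : ℤ) = ⌈t / c⌉ - 1 := Int.toNat_of_nonneg (by omega)
      have := congrArg (fun z : ℤ => (z : ℝ)) this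
      push_cast at this
      linarith
    · have : (0:ℝ) ≤ (⌈t / c⌉ : ℝ) - 1 := by exact_mod_cast (by omega : (0:ℤ) ≤ ⌈t / c⌉ - 1)
      nlinarith
  · have h1 : t / c ≤ (⌈t / c⌉ : ℝ) := Int.le_ceil _
    have h2 : ((⌈t / c⌉ - 1).toNat : ℤ) = ⌈t / c⌉ - 1 := Int.toNat_of_nonneg (by omega)
    have h3 := congrArg (fun z : ℤ => (z : ℝ)) h2
    push_cast at h3
    have : ((((⌈t / c⌉ - 1).toNat : ℕ) : ℝ) + 1) = (⌈t / c⌉ : ℝ) := by linarith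
    rw [this]
    calc t = (t / c) * c := by field_simp
      _ ≤ (⌈t / c⌉ : ℝ) * c := by nlinarith

/-- **Existence of predictable modifications.**  Let `T ∈ [0,∞)`, let
`(Ω, F, P, (𝓕_t)_{t∈[0,T]})` be a stochastic basis (a probability space with a normal
filtration), let `(E, d)` be a complete separable metric space, and let
`Y : [0,T] × Ω → E` be an adapted process such that for every `t ∈ (0,T]` it holds that
`limsup_{[0,T] ∋ s → t} E[min{1, d(Y_s, Y_t)}] = 0`.  Then there exists a predictable
process `X : [0,T] × Ω → E` with `P(X_t = Y_t) = 1` for all `t ∈ [0,T]`. -/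
theorem exists_predictable_modification
    {Ω : Type*} [m : MeasurableSpace Ω] (P : Measure Ω) [IsProbabilityMeasure P]
    (T : ℝ) (hT : 0 ≤ T)
    (𝓕 : ℝ → MeasurableSpace Ω)
    (h_le : ∀ t : ℝ, 𝓕 t ≤ m)
    (h_mono : ∀ s t : ℝ, s ≤ t → 𝓕 s ≤ 𝓕 t)
    (h_right : ∀ t ∈ Set.Ico (0:ℝ) T, 𝓕 t = ⨅ s ∈ Set.Ioc t T, 𝓕 s)
    (h_null : ∀ A : Set Ω, P A = 0 → MeasurableSet[𝓕 0] A)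
    {E : Type*} [MetricSpace E] [CompleteSpace E] [TopologicalSpace.SeparableSpace E]
    [MeasurableSpace E] [BorelSpace E]
    (Y : Set.Icc (0:ℝ) T → Ω → E)
    (hY_adapted : ∀ t : Set.Icc (0:ℝ) T, Measurable[𝓕 t] (Y t))
    (hY_cont : ∀ t : Set.Icc (0:ℝ) T, 0 < (t : ℝ) →
      Filter.limsup
        (fun s : Set.Icc (0:ℝ) T => ∫ ω, min 1 (dist (Y s ω) (Y t ω)) ∂P)
        (nhds t) = 0) :
    ∃ X : Set.Icc (0:ℝ) T → Ω → E,
      Measurable[Pred 𝓕 T] (fun p : Set.Icc (0:ℝ) T × Ω => X p.1 p.2) ∧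
      ∀ t : Set.Icc (0:ℝ) T, P {ω | X t ω = Y t ω} = 1 := by
  classical
  haveI : SecondCountableTopology E := UniformSpace.secondCountable_of_separable E
  haveI hΩne : Nonempty Ω := by
    by_contra h
    rw [not_nonempty_iff] at h
    have h1 : P univ = 1 := measure_univ
    rw [Set.eq_empty_of_isEmpty (univ : Set Ω), measure_empty] at h1
    exact zero_ne_one h1
  have h0I : (0:ℝ) ∈ Set.Icc (0:ℝ) T := ⟨le_refl _, hT⟩
  haveI : Nonempty E := ⟨Y ⟨0, h0I⟩ (Classical.arbitrary Ω)⟩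
  letI : MeasurableSpace (Set.Icc (0:ℝ) T × Ω) := Pred 𝓕 T
  set ρ : Set.Icc (0:ℝ) T → Set.Icc (0:ℝ) T → ℝ :=
    fun s t => ∫ ω, min 1 (dist (Y s ω) (Y t ω)) ∂P with hρdef
  have hYm : ∀ t : Set.Icc (0:ℝ) T, Measurable (Y t) :=
    fun t => (hY_adapted t).mono (h_le t) le_rfl
  have hmeas : ∀ s t : Set.Icc (0:ℝ) T,
      Measurable (fun ω => min 1 (dist (Y s ω) (Y t ω))) :=
    fun s t => measurable_const.min ((hYm s).dist (hYm t))
  have hint : ∀ s t : Set.Icc (0:ℝ) T,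
      Integrable (fun ω => min 1 (dist (Y s ω) (Y t ω))) P := by
    intro s t
    refine (integrable_const (1:ℝ)).mono' (hmeas s t).aestronglyMeasurable ?_
    filter_upwards with ω
    rw [Real.norm_eq_abs, abs_of_nonneg (le_min zero_le_one dist_nonneg)]
    exact min_le_left _ _
  have hρ_nonneg : ∀ s t : Set.Icc (0:ℝ) T, 0 ≤ ρ s t := fun s t =>
    integral_nonneg fun ω => le_min zero_le_one dist_nonneg
  have hρ_self : ∀ t : Set.Icc (0:ℝ) T, ρ t t = 0 := by
    intro t
    simp [hρdef]
  have hρ_comm : ∀ s t : Set.Icc (0:ℝ) T, ρ s t = ρ t s := by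
    intro s t
    simp only [hρdef, dist_comm]
  have hρ_tri : ∀ s t u : Set.Icc (0:ℝ) T, ρ s u ≤ ρ s t + ρ t u := by
    intro s t u
    rw [hρdef]
    simp only
    rw [← integral_add (hint s t) (hint t u)]
    refine integral_mono (hint s u) ((hint s t).add (hint t u)) fun ω => ?_
    simp only
    rcases le_total 1 (dist (Y s ω) (Y t ω)) with h | h
    · have h2 : (0:ℝ) ≤ min 1 (dist (Y t ω) (Y u ω)) := le_min zero_le_one dist_nonneg
      rw [min_eq_left h]
      have := min_le_left (1:ℝ) (dist (Y s ω) (Y u ω))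
      linarith
    · rcases le_total 1 (dist (Y t ω) (Y u ω)) with h' | h'
      · have h2 : (0:ℝ) ≤ min 1 (dist (Y s ω) (Y t ω)) := le_min zero_le_one dist_nonneg
        rw [min_eq_left h']
        have := min_le_left (1:ℝ) (dist (Y s ω) (Y u ω))
        linarith
      · rw [min_eq_right h, min_eq_right h']
        exact le_trans (min_le_right _ _) (dist_triangle _ (Y t ω) _)
  have hρ_le_one : ∀ s t : Set.Icc (0:ℝ) T, ρ s t ≤ 1 := by
    intro s t
    calc ρ s t ≤ ∫ _, (1:ℝ) ∂P :=
          integral_mono (hint s t) (integrable_const 1) fun ω => min_le_left _ _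
      _ = 1 := by simp
  have hcont : ∀ t : Set.Icc (0:ℝ) T, 0 < (t : ℝ) →
      Tendsto (fun s => ρ s t) (nhds t) (nhds 0) := by
    intro t ht
    have hb1 : IsBoundedUnder (· ≤ ·) (nhds t) (fun s => ρ s t) :=
      isBoundedUnder_of ⟨1, fun s => hρ_le_one s t⟩
    have hb2 : IsBoundedUnder (· ≥ ·) (nhds t) (fun s => ρ s t) :=
      isBoundedUnder_of ⟨0, fun s => hρ_nonneg s t⟩
    have hYc : limsup (fun s => ρ s t) (nhds t) = 0 := hY_cont t ht
    exact tendsto_of_le_liminf_of_limsup_le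
      (le_liminf_of_le (hb1.isCoboundedUnder_ge)
        (Filter.Eventually.of_forall fun s => hρ_nonneg s t))
      (le_of_eq hYc) hb1 hb2
  have hunif : ∀ a : ℝ, 0 < a → ∀ ε : ℝ, 0 < ε → ∃ δ : ℝ, 0 < δ ∧
      ∀ s t : Set.Icc (0:ℝ) T, a ≤ (s:ℝ) → a ≤ (t:ℝ) → |(s:ℝ) - (t:ℝ)| ≤ δ →
        ρ s t < ε := by
    intro a ha ε hε
    by_contra hcon
    push_neg at hcon
    choose s t hs ht hst hρst using fun n : ℕ => hcon (1/(n+1)) (by positivity)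
    have hsmem : ∀ n, (s n : ℝ) ∈ Set.Icc a T := fun n => ⟨hs n, (s n).2.2⟩
    obtain ⟨u, hu, φ, hφ, hconv⟩ :=
      tendsto_subseq_of_bounded (Metric.isBounded_Icc a T) hsmem
    rw [IsClosed.closure_eq isClosed_Icc] at hu
    have hu' : u ∈ Set.Icc (0:ℝ) T := ⟨le_trans ha.le hu.1, hu.2⟩
    have hupos : (0:ℝ) < u := lt_of_lt_of_le ha hu.1
    have hsφ : Tendsto (fun n => s (φ n)) atTop (nhds (⟨u, hu'⟩ : Set.Icc (0:ℝ) T)) :=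
      tendsto_subtype_rng.2 hconv
    have hdist : Tendsto (fun n => dist ((s (φ n) : ℝ)) ((t (φ n) : ℝ))) atTop (nhds 0) := by
      refine squeeze_zero (fun n => dist_nonneg) (fun n => ?_)
        ((tendsto_one_div_add_atTop_nhds_zero_nat).comp hφ.tendsto_atTop)
      simpa [Real.dist_eq] using hst (φ n)
    have htconv : Tendsto (fun n => (t (φ n) : ℝ)) atTop (nhds u) :=
      Filter.Tendsto.congr_dist hconv hdist
    have htφ : Tendsto (fun n => t (φ n)) atTop (nhds (⟨u, hu'⟩ : Set.Icc (0:ℝ) T)) :=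
      tendsto_subtype_rng.2 htconv
    have hc1 : Tendsto (fun n => ρ (s (φ n)) ⟨u, hu'⟩) atTop (nhds 0) :=
      (hcont ⟨u, hu'⟩ hupos).comp hsφ
    have hc2 : Tendsto (fun n => ρ (t (φ n)) ⟨u, hu'⟩) atTop (nhds 0) :=
      (hcont ⟨u, hu'⟩ hupos).comp htφ
    have hsum : Tendsto (fun n => ρ (s (φ n)) ⟨u, hu'⟩ + ρ (t (φ n)) ⟨u, hu'⟩)
        atTop (nhds 0) := by
      simpa using hc1.add hc2
    have hlow : ∀ n, ε ≤ ρ (s (φ n)) ⟨u, hu'⟩ + ρ (t (φ n)) ⟨u, hu'⟩ := by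
      intro n
      refine le_trans (hρst (φ n)) ?_
      calc ρ (s (φ n)) (t (φ n))
          ≤ ρ (s (φ n)) ⟨u, hu'⟩ + ρ ⟨u, hu'⟩ (t (φ n)) := hρ_tri _ _ _
        _ = ρ (s (φ n)) ⟨u, hu'⟩ + ρ (t (φ n)) ⟨u, hu'⟩ := by rw [hρ_comm ⟨u, hu'⟩ _]
    have : ε ≤ 0 := ge_of_tendsto hsum (Filter.Eventually.of_forall hlow)
    linarith
  choose δ hδpos hδ using fun n : ℕ =>
    hunif (1/(n+1)) (by positivity) ((1/4)^n) (by positivity)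
  set c : ℕ → ℝ := fun n => min (δ n) (1/(n+1)) with hcdef
  have hc_pos : ∀ n, 0 < c n := fun n => lt_min (hδpos n) (by positivity)
  have hc_le : ∀ n, c n ≤ 1/(n+1) := fun n => min_le_right _ _
  have hc_le' : ∀ n, c n ≤ δ n := fun n => min_le_left _ _
  have hπ_mem : ∀ n (t : Set.Icc (0:ℝ) T), pir (c n) (t:ℝ) ∈ Set.Icc (0:ℝ) T :=
    fun n t => ⟨pir_nonneg _ _, le_trans (pir_le (hc_pos n) t.2.1) t.2.2⟩
  set π : ℕ → Set.Icc (0:ℝ) T → Set.Icc (0:ℝ) T :=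
    fun n t => ⟨pir (c n) (t:ℝ), hπ_mem n t⟩ with hπdef
  set Xn : ℕ → Set.Icc (0:ℝ) T × Ω → E := fun n p => Y (π n p.1) p.2 with hXndef
  have hπ_zero : ∀ n, π n ⟨0, h0I⟩ = ⟨0, h0I⟩ := by
    intro n
    apply Subtype.ext
    exact pir_zero _ (hc_pos n)
  have hXnm : ∀ n, Measurable[Pred 𝓕 T] (Xn n) := by
    intro n B hB
    have hg_mem : ∀ k : ℕ, min ((k:ℝ) * c n) T ∈ Set.Icc (0:ℝ) T :=
      fun k => ⟨le_min (mul_nonneg (Nat.cast_nonneg k) (hc_pos n).le) hT, min_le_right _ _⟩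
    set gp : ℕ → Set.Icc (0:ℝ) T := fun k => ⟨min ((k:ℝ) * c n) T, hg_mem k⟩ with hgpdef
    have hA : ∀ k : ℕ, MeasurableSet[𝓕 (min ((k:ℝ) * c n) T)] (Y (gp k) ⁻¹' B) :=
      fun k => hY_adapted (gp k) hB
    have hdecomp : Xn n ⁻¹' B =
        {p : Set.Icc (0:ℝ) T × Ω | (p.1:ℝ) = 0 ∧ p.2 ∈ Y (gp 0) ⁻¹' B} ∪
        ⋃ k : ℕ, {p : Set.Icc (0:ℝ) T × Ω | (k:ℝ) * c n < (p.1:ℝ) ∧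
          (p.1:ℝ) ≤ min (((k:ℝ) + 1) * c n) T ∧ p.2 ∈ Y (gp k) ⁻¹' B} := by
      ext p
      simp only [Set.mem_preimage, Set.mem_union, Set.mem_iUnion, Set.mem_setOf_eq, hXndef]
      constructor
      · intro hp
        rcases eq_or_lt_of_le p.1.2.1 with h0 | hpos
        · left
          have hπ0 : π n p.1 = gp 0 := by
            apply Subtype.ext
            show pir (c n) (p.1 : ℝ) = min ((0:ℕ) * c n) T
            rw [← h0, pir_zero _ (hc_pos n)]
            simp [min_eq_left hT]
          rw [hπ0] at hp
          exact ⟨h0.symm, hp⟩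
        · right
          obtain ⟨k, hk1, hk2⟩ := pir_nat (hc_pos n) hpos
          have hkT : (k:ℝ) * c n ≤ T := by
            rw [← hk1]
            exact le_trans (pir_le (hc_pos n) p.1.2.1) p.1.2.2
          have hπk : π n p.1 = gp k := by
            apply Subtype.ext
            show pir (c n) (p.1 : ℝ) = min ((k:ℝ) * c n) T
            rw [hk1, min_eq_left hkT]
          rw [hπk] at hp
          refine ⟨k, ?_, le_min hk2 p.1.2.2, hp⟩
          rw [← hk1]
          exact pir_lt (hc_pos n) hpos
      · rintro (⟨h0, hp⟩ | ⟨k, hk1, hk2, hp⟩)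
        · have hπ0 : π n p.1 = gp 0 := by
            apply Subtype.ext
            show pir (c n) (p.1 : ℝ) = min ((0:ℕ) * c n) T
            rw [h0, pir_zero _ (hc_pos n)]
            simp [min_eq_left hT]
          rw [hπ0]
          exact hp
        · have hpos : (0:ℝ) < (p.1 : ℝ) :=
            lt_of_le_of_lt (mul_nonneg (Nat.cast_nonneg k) (hc_pos n).le) hk1
          have hkT : (k:ℝ) * c n ≤ T := le_trans hk1.le p.1.2.2
          have hπk : π n p.1 = gp k := by
            apply Subtype.ext
            show pir (c n) (p.1 : ℝ) = min ((k:ℝ) * c n) T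
            rw [pir_eq (hc_pos n) hk1 (le_trans hk2 (min_le_left _ _)), min_eq_left hkT]
          rw [hπk]
          exact hp
    rw [hdecomp]
    apply MeasurableSet.union
    · refine MeasurableSpace.measurableSet_generateFrom (Or.inr ⟨Y (gp 0) ⁻¹' B, ?_, rfl⟩)
      have := hA 0
      rwa [show min (((0:ℕ):ℝ) * c n) T = 0 by simp [min_eq_left hT]] at this
    · apply MeasurableSet.iUnion
      intro k
      by_cases hk : (k:ℝ) * c n < min (((k:ℝ) + 1) * c n) T
      · refine MeasurableSpace.measurableSet_generateFrom
          (Or.inl ⟨(k:ℝ) * c n, min (((k:ℝ) + 1) * c n) T, Y (gp k) ⁻¹' B,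
            mul_nonneg (Nat.cast_nonneg k) (hc_pos n).le, hk, min_le_right _ _, ?_, rfl⟩)
        exact h_mono _ _ (min_le_left _ _) _ (hA k)
      · have hempty : {p : Set.Icc (0:ℝ) T × Ω | (k:ℝ) * c n < (p.1:ℝ) ∧
            (p.1:ℝ) ≤ min (((k:ℝ) + 1) * c n) T ∧ p.2 ∈ Y (gp k) ⁻¹' B} = ∅ :=
          Set.eq_empty_iff_forall_notMem.2 fun p hp => hk (lt_of_lt_of_le hp.1 hp.2.1)
        rw [hempty]
        exact MeasurableSet.empty
  set C := {p : Set.Icc (0:ℝ) T × Ω |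
    ∃ e : E, Tendsto (fun n => Xn n p) atTop (nhds e)} with hCdef
  have hCm : MeasurableSet[Pred 𝓕 T] C := measurableSet_exists_tendsto hXnm
  set z : E := Classical.arbitrary E with hzdef
  set g : ℕ → Set.Icc (0:ℝ) T × Ω → E :=
    fun n => C.piecewise (Xn n) (fun _ => z) with hgdef
  have hgm : ∀ n, Measurable[Pred 𝓕 T] (g n) :=
    fun n => Measurable.piecewise hCm (hXnm n) measurable_const
  set X' : Set.Icc (0:ℝ) T × Ω → E :=
    fun p => limUnder atTop (fun n => g n p) with hX'def
  have hgtendsto : ∀ p, Tendsto (fun n => g n p) atTop (nhds (X' p)) := by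
    intro p
    have hex : ∃ e : E, Tendsto (fun n => g n p) atTop (nhds e) := by
      by_cases hp : p ∈ C
      · obtain ⟨e, he⟩ := hp
        have hmem : p ∈ C := ⟨e, he⟩
        have hfun : (fun n => g n p) = (fun n => Xn n p) :=
          funext fun n => Set.piecewise_eq_of_mem _ _ _ hmem
        exact ⟨e, hfun ▸ he⟩
      · have hfun : (fun n => g n p) = (fun _ => z) :=
          funext fun n => Set.piecewise_eq_of_notMem _ _ _ hp
        exact ⟨z, hfun ▸ tendsto_const_nhds⟩
    obtain ⟨e, he⟩ := hex
    have heq : X' p = e := he.limUnder_eq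
    rw [heq]
    exact he
  have hX'm : Measurable[Pred 𝓕 T] X' :=
    measurable_of_tendsto_metrizable hgm (tendsto_pi_nhds.2 hgtendsto)
  have key : ∀ t : Set.Icc (0:ℝ) T, ∀ᵐ ω ∂P,
      Tendsto (fun n => Xn n (t, ω)) atTop (nhds (Y t ω)) := by
    intro t
    rcases eq_or_lt_of_le t.2.1 with h0 | ht
    · -- t = 0 : the sequence is constant
      have ht0 : t = ⟨0, h0I⟩ := Subtype.ext h0.symm
      filter_upwards with ω
      have : ∀ n, Xn n (t, ω) = Y t ω := by
        intro n
        show Y (π n t) ω = Y t ω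
        rw [ht0, hπ_zero n]
      simp only [this]
      exact tendsto_const_nhds
    · -- t > 0
      obtain ⟨N, hN⟩ := exists_nat_gt (2 / (t:ℝ))
      set A : ℕ → Set Ω := fun n =>
        {ω | ((1:ℝ)/2)^(n + N) ≤ min 1 (dist (Y (π (n + N) t) ω) (Y t ω))} with hAdef
      have h2t : ∀ n : ℕ, 2 / ((n + N : ℕ) + 1 : ℝ) < (t : ℝ) := by
        intro n
        have hm : 2 / (t:ℝ) < ((n + N : ℕ) : ℝ) + 1 := by
          refine lt_of_lt_of_le hN ?_
          have : (N : ℝ) ≤ ((n + N : ℕ) : ℝ) := by exact_mod_cast Nat.le_add_left N n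
          linarith
        rw [div_lt_iff₀ ht] at hm
        rw [div_lt_iff₀ (by positivity)]
        nlinarith
      have hρb : ∀ n : ℕ, ρ (π (n + N) t) t < ((1:ℝ)/4)^(n + N) := by
        intro n
        have hc1 : c (n + N) ≤ 1/(((n + N : ℕ):ℝ)+1) := hc_le (n + N)
        have hsplit : 2/(((n + N : ℕ):ℝ)+1) = 1/(((n + N : ℕ):ℝ)+1) + 1/(((n + N : ℕ):ℝ)+1) := by
          ring
        have hlb : 1/(((n + N : ℕ):ℝ)+1) < (t:ℝ) - c (n + N) := by
          have h2 := h2t n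
          rw [hsplit] at h2
          linarith
        refine hδ (n + N) (π (n + N) t) t ?_ ?_ ?_
        · show 1/(((n + N : ℕ):ℝ)+1) ≤ pir (c (n + N)) (t:ℝ)
          have := sub_le_pir (c := c (n + N)) (t := (t:ℝ)) (hc_pos (n + N))
          linarith
        · have hc0 := hc_pos (n + N)
          show 1/(((n + N : ℕ):ℝ)+1) ≤ (t:ℝ)
          linarith
        · show |pir (c (n + N)) (t:ℝ) - (t:ℝ)| ≤ δ (n + N)
          rw [abs_sub_comm, abs_of_nonneg (sub_nonneg.2 (pir_le (hc_pos (n + N)) t.2.1))]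
          have := sub_le_pir (c := c (n + N)) (t := (t:ℝ)) (hc_pos (n + N))
          have := hc_le' (n + N)
          linarith
      have hmar : ∀ n : ℕ, P (A n) ≤ ENNReal.ofReal (((1:ℝ)/2)^n) := by
        intro n
        have hpow2 : (0:ℝ) < ((1:ℝ)/2)^(n + N) := by positivity
        have hmk := mul_meas_ge_le_integral_of_nonneg
          (μ := P) (f := fun ω => min 1 (dist (Y (π (n + N) t) ω) (Y t ω)))
          (Filter.Eventually.of_forall fun ω => le_min zero_le_one dist_nonneg)
          (hint (π (n + N) t) t) (((1:ℝ)/2)^(n + N))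
        have htoR : (P (A n)).toReal ≤ ((1:ℝ)/2)^(n + N) := by
          have hAeq : A n = {ω | ((1:ℝ)/2)^(n + N) ≤
              min 1 (dist (Y (π (n + N) t) ω) (Y t ω))} := rfl
          rw [hAeq]
          have hρ' : ρ (π (n + N) t) t < ((1:ℝ)/4)^(n + N) := hρb n
          have h4 : ((1:ℝ)/4)^(n + N) = ((1:ℝ)/2)^(n + N) * ((1:ℝ)/2)^(n + N) := by
            rw [← mul_pow]; norm_num
          have hρeq : ρ (π (n + N) t) t =
              ∫ ω, min 1 (dist (Y (π (n + N) t) ω) (Y t ω)) ∂P := rfl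
          have hx := hmk
          rw [mul_comm, ← hρeq] at hx
          have hxd : (P {ω | ((1:ℝ)/2)^(n + N) ≤
              min 1 (dist (Y (π (n + N) t) ω) (Y t ω))}).toReal ≤
              ρ (π (n + N) t) t / (((1:ℝ)/2)^(n + N)) := (le_div_iff₀ hpow2).2 hx
          have hdd : ρ (π (n + N) t) t / (((1:ℝ)/2)^(n + N)) < ((1:ℝ)/2)^(n + N) := by
            rw [div_lt_iff₀ hpow2, ← h4]
            exact hρ'
          linarith
        calc P (A n) = ENNReal.ofReal ((P (A n)).toReal) :=
              (ENNReal.ofReal_toReal (measure_ne_top P _)).symm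
          _ ≤ ENNReal.ofReal (((1:ℝ)/2)^(n + N)) := ENNReal.ofReal_le_ofReal htoR
          _ ≤ ENNReal.ofReal (((1:ℝ)/2)^n) := by
              refine ENNReal.ofReal_le_ofReal ?_
              exact pow_le_pow_of_le_one (by norm_num) (by norm_num) (Nat.le_add_right n N)
      have hsum : (∑' n, P (A n)) ≠ ⊤ := by
        refine ne_top_of_le_ne_top ?_ (ENNReal.tsum_le_tsum hmar)
        have heq : ∀ n : ℕ, ENNReal.ofReal (((1:ℝ)/2)^n) = (ENNReal.ofReal ((1:ℝ)/2))^n :=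
          fun n => ENNReal.ofReal_pow (by norm_num) n
        simp only [heq]
        rw [ENNReal.tsum_geometric]
        refine ENNReal.inv_ne_top.2 ?_
        intro hzero
        have hlt : ENNReal.ofReal ((1:ℝ)/2) < 1 := by
          rw [ENNReal.ofReal_lt_one]; norm_num
        exact absurd (tsub_eq_zero_iff_le.1 hzero) (not_le.2 hlt)
      filter_upwards [MeasureTheory.ae_eventually_notMem hsum] with ω hω
      rw [tendsto_iff_dist_tendsto_zero]
      have hev : ∀ᶠ m in atTop, dist (Xn m (t, ω)) (Y t ω) ≤ ((1:ℝ)/2)^m := by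
        obtain ⟨M, hM⟩ := eventually_atTop.1 hω
        rw [eventually_atTop]
        refine ⟨M + N + 1, fun m hm => ?_⟩
        have h1 : ω ∉ A (m - N) := hM (m - N) (by omega)
        simp only [hAdef, Set.mem_setOf_eq, not_le] at h1
        have h2 : m - N + N = m := by omega
        rw [h2] at h1
        have hpow : ((1:ℝ)/2)^m < 1 := pow_lt_one₀ (by norm_num) (by norm_num) (by omega)
        show dist (Y (π m t) ω) (Y t ω) ≤ ((1:ℝ)/2)^m
        rcases le_total (dist (Y (π m t) ω) (Y t ω)) 1 with hd | hd
        · rw [min_eq_right hd] at h1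
          exact h1.le
        · rw [min_eq_left hd] at h1
          linarith
      refine squeeze_zero' (Filter.Eventually.of_forall fun m => dist_nonneg) hev ?_
      exact tendsto_pow_atTop_nhds_zero_of_lt_one (by norm_num) (by norm_num)
  refine ⟨fun t ω => X' (t, ω), hX'm, fun t => ?_⟩
  have hae : ∀ᵐ ω ∂P, X' (t, ω) = Y t ω := by
    filter_upwards [key t] with ω hω
    have hmem : (t, ω) ∈ C := ⟨Y t ω, hω⟩
    have hfun : (fun n => g n (t, ω)) = (fun n => Xn n (t, ω)) :=
      funext fun n => Set.piecewise_eq_of_mem _ _ _ hmem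
    have h1 : Tendsto (fun n => g n (t, ω)) atTop (nhds (Y t ω)) := hfun ▸ hω
    exact tendsto_nhds_unique (hgtendsto (t, ω)) h1
  have h0 : P {ω | ¬ (X' (t, ω) = Y t ω)} = 0 := ae_iff.1 hae
  have h1 : (1:ENNReal) ≤ P {ω | X' (t, ω) = Y t ω} := by
    calc (1:ENNReal) = P univ := measure_univ.symm
      _ ≤ P ({ω | X' (t, ω) = Y t ω} ∪ {ω | ¬ (X' (t, ω) = Y t ω)}) := by
          refine measure_mono fun ω _ => ?_
          by_cases h : X' (t, ω) = Y t ω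
          exacts [Or.inl h, Or.inr h]
      _ ≤ P {ω | X' (t, ω) = Y t ω} + P {ω | ¬ (X' (t, ω) = Y t ω)} :=
          measure_union_le _ _
      _ = P {ω | X' (t, ω) = Y t ω} := by rw [h0, add_zero]
  exact le_antisymm prob_le_one h1
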